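/- arXiv:2404.01864 — 2 statements merged into one kernel-verified Lean document; each statement's English description precedes it below -/
import Mathlib

section
/- Let K ∈ ℝ^{N×N} be symmetric positive definite, let P ∈ ℝ^{k×N} be a fixed matrix, and for v ∈ ℝ^n_{≥0} let Γ(v) = (K⁻¹ + D(v))⁻¹ where D(v) = diag(v₁ I_{m₁}, …, v_n I_{m_n}). Then v ↦ tr(P Γ(v) Pᵀ) is a convex function on ℝ^n_{≥0}. -/
open Matrix

/-- Block-diagonal matrix `D(v) = diag(v₁ I_{m₁}, …, v_n I_{m_n})` on the index
type `Σ i, Fin (m i)`. -/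
def blockDiag {n : ℕ} (m : Fin n → ℕ) (v : Fin n → ℝ) :
    Matrix ((i : Fin n) × Fin (m i)) ((i : Fin n) × Fin (m i)) ℝ :=
  Matrix.diagonal fun x => v x.1

/-- For a positive definite matrix `A`, `2⟨p,y⟩ - yᵀAy ≤ pᵀA⁻¹p` (the quadratic
`y ↦ 2⟨p,y⟩ - yᵀAy` is maximized at `y = A⁻¹p` with value `pᵀA⁻¹p`). -/
lemma quad_le {α : Type*} [Fintype α] [DecidableEq α] (A : Matrix α α ℝ) (hA : A.PosDef)
    (p y : α → ℝ) : 2 * (p ⬝ᵥ y) - y ⬝ᵥ (A *ᵥ y) ≤ p ⬝ᵥ (A⁻¹ *ᵥ p) := by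
  set q := A⁻¹ *ᵥ p with hq
  have hAq : A *ᵥ q = p := by
    rw [hq, mulVec_mulVec, Matrix.mul_nonsing_inv A (isUnit_iff_ne_zero.2 hA.det_pos.ne'),
      one_mulVec]
  have hsym : Aᵀ = A := by
    have := hA.isHermitian
    simpa [Matrix.IsHermitian, conjTranspose_eq_transpose_of_trivial] using this
  have h0 : 0 ≤ (y - q) ⬝ᵥ (A *ᵥ (y - q)) := by
    simpa using hA.posSemidef.dotProduct_mulVec_nonneg (y - q)
  have e1 : y ⬝ᵥ (A *ᵥ q) = p ⬝ᵥ y := by rw [hAq, dotProduct_comm]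
  have e2 : q ⬝ᵥ (A *ᵥ y) = p ⬝ᵥ y := by
    rw [dotProduct_mulVec, ← mulVec_transpose, hsym, hAq]
  have e3 : q ⬝ᵥ (A *ᵥ q) = p ⬝ᵥ q := by rw [hAq, dotProduct_comm]
  have expand : (y - q) ⬝ᵥ (A *ᵥ (y - q))
      = y ⬝ᵥ (A *ᵥ y) - 2 * (p ⬝ᵥ y) + p ⬝ᵥ q := by
    rw [mulVec_sub, sub_dotProduct, dotProduct_sub, dotProduct_sub, e1, e2, e3]
    ring
  rw [expand] at h0
  linarith

/-- `tr(P M Pᵀ)` as a sum of the quadratic forms of `M` at the rows of `P`. -/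
lemma trace_eq_sum_rows {α : Type*} [Fintype α] [DecidableEq α] {k : ℕ}
    (P : Matrix (Fin k) α ℝ) (M : Matrix α α ℝ) :
    Matrix.trace (P * M * P.transpose) = ∑ j, (fun x => P j x) ⬝ᵥ (M *ᵥ fun x => P j x) := by
  rw [Matrix.trace]
  refine Finset.sum_congr rfl fun j _ => ?_
  show (P * M * P.transpose) j j = _
  rw [Matrix.mul_assoc, Matrix.mul_apply]
  simp [Matrix.mul_apply, Matrix.mulVec, dotProduct, Matrix.transpose_apply]

/-- For symmetric positive definite `K` and any fixed matrix `P`, the map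
`v ↦ tr(P Γ(v) Pᵀ)` with `Γ(v) = (K⁻¹ + D(v))⁻¹` is convex on the nonnegative
orthant `ℝ^n_{≥0}`. -/
theorem trace_posterior_covariance_convex {n k : ℕ} (m : Fin n → ℕ)
    (K : Matrix ((i : Fin n) × Fin (m i)) ((i : Fin n) × Fin (m i)) ℝ)
    (hK : K.PosDef)
    (P : Matrix (Fin k) ((i : Fin n) × Fin (m i)) ℝ) :
    ConvexOn ℝ {v : Fin n → ℝ | ∀ i, 0 ≤ v i}
      (fun v => Matrix.trace (P * (K⁻¹ + blockDiag m v)⁻¹ * P.transpose)) := by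
  have hKinv : (K⁻¹).PosDef := hK.inv
  have hPos : ∀ v : Fin n → ℝ, (∀ i, 0 ≤ v i) → (K⁻¹ + blockDiag m v).PosDef := by
    intro v hv
    exact hKinv.add_posSemidef (Matrix.PosSemidef.diagonal fun x => hv x.1)
  constructor
  · intro u hu w hw a b ha hb hab i
    exact add_nonneg (mul_nonneg ha (hu i)) (mul_nonneg hb (hw i))
  · intro u hu w hw a b ha hb hab
    obtain rfl : b = 1 - a := by linarith
    set A := K⁻¹ + blockDiag m u with hAdef
    set B := K⁻¹ + blockDiag m w with hBdef
    have hA : A.PosDef := hPos u hu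
    have hB : B.PosDef := hPos w hw
    have hvw : ∀ i, 0 ≤ (a • u + (1 - a) • w) i := fun i =>
      add_nonneg (mul_nonneg ha (hu i)) (mul_nonneg hb (hw i))
    set M := K⁻¹ + blockDiag m (a • u + (1 - a) • w) with hMdef
    have hM : M.PosDef := hPos _ hvw
    have hMeq : M = a • A + (1 - a) • B := by
      ext x y
      simp only [hMdef, hAdef, hBdef, _root_.blockDiag, Matrix.add_apply, Matrix.smul_apply,
        Matrix.diagonal_apply, Pi.add_apply, Pi.smul_apply, smul_eq_mul]
      split_ifs with h
      · ring
      · ring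
    simp only [smul_eq_mul]
    rw [trace_eq_sum_rows, trace_eq_sum_rows, trace_eq_sum_rows,
      Finset.mul_sum, Finset.mul_sum, ← Finset.sum_add_distrib]
    apply Finset.sum_le_sum
    intro j _
    set p : (Sigma fun i => Fin (m i)) → ℝ := fun x => P j x with hpdef
    set y := M⁻¹ *ᵥ p with hy
    have hMy : M *ᵥ y = p := by
      rw [hy, mulVec_mulVec, Matrix.mul_nonsing_inv M (isUnit_iff_ne_zero.2 hM.det_pos.ne'),
        one_mulVec]
    have hval : p ⬝ᵥ (M⁻¹ *ᵥ p) = 2 * (p ⬝ᵥ y) - y ⬝ᵥ (M *ᵥ y) := by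
      rw [hMy, ← hy, dotProduct_comm y p]
      ring
    have hsplit : y ⬝ᵥ (M *ᵥ y) = a * (y ⬝ᵥ (A *ᵥ y)) + (1 - a) * (y ⬝ᵥ (B *ᵥ y)) := by
      rw [hMeq, add_mulVec, dotProduct_add, smul_mulVec, smul_mulVec,
        dotProduct_smul, dotProduct_smul, smul_eq_mul, smul_eq_mul]
    have hAle : 2 * (p ⬝ᵥ y) - y ⬝ᵥ (A *ᵥ y) ≤ p ⬝ᵥ (A⁻¹ *ᵥ p) := quad_le A hA p y
    have hBle : 2 * (p ⬝ᵥ y) - y ⬝ᵥ (B *ᵥ y) ≤ p ⬝ᵥ (B⁻¹ *ᵥ p) := quad_le B hB p y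
    calc p ⬝ᵥ (M⁻¹ *ᵥ p) = a * (2 * (p ⬝ᵥ y) - y ⬝ᵥ (A *ᵥ y))
          + (1 - a) * (2 * (p ⬝ᵥ y) - y ⬝ᵥ (B *ᵥ y)) := by
            linear_combination hval - hsplit
      _ ≤ a * (p ⬝ᵥ (A⁻¹ *ᵥ p)) + (1 - a) * (p ⬝ᵥ (B⁻¹ *ᵥ p)) :=
          add_le_add (mul_le_mul_of_nonneg_left hAle ha) (mul_le_mul_of_nonneg_left hBle hb)
end

section
/- Let A ∈ ℝ^{m×d} and B ∈ ℝ^{d×d} symmetric positive definite with λ_min(Aᵀ B A + C) ≥ μ > 0 for symmetric positive definite C. If Ã satisfies ‖Ã − A‖ ≤ δ with δ‖B‖(2‖A‖ + δ) < μ/2, then Ãᵀ B Ã + C is positive definite with λ_min ≥ μ/2; in particular the perturbed Gauss–Newton system matrix is invertible. -/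
open scoped Matrix.Norms.L2Operator

open Matrix

private lemma euc_dot_abs {k : ℕ} (v w : Fin k → ℝ) :
    |v ⬝ᵥ w| ≤ ‖(WithLp.equiv 2 (Fin k → ℝ)).symm v‖ * ‖(WithLp.equiv 2 (Fin k → ℝ)).symm w‖ := by
  have h := abs_real_inner_le_norm ((WithLp.equiv 2 (Fin k → ℝ)).symm v)
      ((WithLp.equiv 2 (Fin k → ℝ)).symm w)
  rwa [WithLp.equiv_symm_apply, EuclideanSpace.inner_toLp_toLp, star_trivial, dotProduct_comm] at h

private lemma euc_dot_self {k : ℕ} (v : Fin k → ℝ) :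
    v ⬝ᵥ v = ‖(WithLp.equiv 2 (Fin k → ℝ)).symm v‖ ^ 2 := by
  have h := real_inner_self_eq_norm_sq ((WithLp.equiv 2 (Fin k → ℝ)).symm v)
  rwa [WithLp.equiv_symm_apply, EuclideanSpace.inner_toLp_toLp, star_trivial] at h

private lemma euc_mulVec_norm {k l : ℕ} (M : Matrix (Fin k) (Fin l) ℝ) (v : Fin l → ℝ) :
    ‖(WithLp.equiv 2 (Fin k → ℝ)).symm (M *ᵥ v)‖ ≤
      ‖M‖ * ‖(WithLp.equiv 2 (Fin l → ℝ)).symm v‖ :=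
  M.l2_opNorm_mulVec ((WithLp.equiv 2 (Fin l → ℝ)).symm v)

/-- Perturbation bound for the Gauss–Newton system matrix: if
`λ_min(Aᵀ B A + C) ≥ μ > 0` (`B, C` symmetric positive definite) and
`‖Ã − A‖ ≤ δ` with `δ‖B‖(2‖A‖ + δ) < μ/2`, then `Ãᵀ B Ã + C` is positive
definite with `λ_min ≥ μ/2`; in particular it is invertible. Norms of matrices
are `ℓ²` operator norms, and `x ⬝ᵥ x = ‖x‖₂²`. -/
theorem gauss_newton_matrix_perturbation {m d : ℕ}
    (A Atil : Matrix (Fin m) (Fin d) ℝ)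
    (B : Matrix (Fin m) (Fin m) ℝ) (hB : B.PosDef)
    (C : Matrix (Fin d) (Fin d) ℝ) (hC : C.PosDef)
    (μ δ : ℝ) (hμ : 0 < μ) (hδ : 0 ≤ δ)
    (hmin : ∀ x : Fin d → ℝ, μ * (x ⬝ᵥ x) ≤ x ⬝ᵥ (Aᵀ * B * A + C).mulVec x)
    (hpert : ‖Atil - A‖ ≤ δ)
    (hsmall : δ * ‖B‖ * (2 * ‖A‖ + δ) < μ / 2) :
    (Atilᵀ * B * Atil + C).PosDef ∧
    (∀ x : Fin d → ℝ, μ / 2 * (x ⬝ᵥ x) ≤ x ⬝ᵥ (Atilᵀ * B * Atil + C).mulVec x) ∧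
    IsUnit (Atilᵀ * B * Atil + C).det := by
  have hBnn : (0:ℝ) ≤ ‖B‖ := norm_nonneg _
  have hAnn : (0:ℝ) ≤ ‖A‖ := norm_nonneg _
  -- quadratic form rewriting
  have key : ∀ (M : Matrix (Fin m) (Fin d) ℝ) (x : Fin d → ℝ),
      x ⬝ᵥ (Mᵀ * B * M) *ᵥ x = (M *ᵥ x) ⬝ᵥ B *ᵥ (M *ᵥ x) := by
    intro M x
    rw [Matrix.mul_assoc, ← Matrix.mulVec_mulVec, Matrix.dotProduct_mulVec,
      Matrix.vecMul_transpose, ← Matrix.mulVec_mulVec]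
  -- main lower bound
  have main : ∀ x : Fin d → ℝ, μ / 2 * (x ⬝ᵥ x) ≤ x ⬝ᵥ (Atilᵀ * B * Atil + C).mulVec x := by
    intro x
    set nx := ‖(WithLp.equiv 2 (Fin d → ℝ)).symm x‖ with hnx
    have hnxnn : (0:ℝ) ≤ nx := norm_nonneg _
    set u := A *ᵥ x with hu
    set e := (Atil - A) *ᵥ x with he
    have hAt : Atil *ᵥ x = u + e := by
      rw [hu, he, ← Matrix.add_mulVec, add_sub_cancel]
    have hnu : ‖(WithLp.equiv 2 (Fin m → ℝ)).symm u‖ ≤ ‖A‖ * nx := euc_mulVec_norm A x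
    have hne : ‖(WithLp.equiv 2 (Fin m → ℝ)).symm e‖ ≤ δ * nx := by
      refine le_trans (euc_mulVec_norm (Atil - A) x) ?_
      exact mul_le_mul_of_nonneg_right hpert hnxnn
    have hBe : ∀ v w : Fin m → ℝ, |v ⬝ᵥ B *ᵥ w| ≤
        ‖(WithLp.equiv 2 (Fin m → ℝ)).symm v‖ * (‖B‖ * ‖(WithLp.equiv 2 (Fin m → ℝ)).symm w‖) := by
      intro v w
      refine le_trans (euc_dot_abs v (B *ᵥ w)) ?_
      exact mul_le_mul_of_nonneg_left (euc_mulVec_norm B w) (norm_nonneg _)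
    have h1 : |u ⬝ᵥ B *ᵥ e| ≤ ‖A‖ * nx * (‖B‖ * (δ * nx)) := by
      refine le_trans (hBe u e) ?_
      have := mul_le_mul hnu (mul_le_mul_of_nonneg_left hne hBnn) (by positivity) (by positivity)
      exact this
    have h2 : |e ⬝ᵥ B *ᵥ u| ≤ δ * nx * (‖B‖ * (‖A‖ * nx)) := by
      refine le_trans (hBe e u) ?_
      exact mul_le_mul hne (mul_le_mul_of_nonneg_left hnu hBnn) (by positivity) (by positivity)
    have h3 : |e ⬝ᵥ B *ᵥ e| ≤ δ * nx * (‖B‖ * (δ * nx)) := by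
      refine le_trans (hBe e e) ?_
      exact mul_le_mul hne (mul_le_mul_of_nonneg_left hne hBnn) (by positivity) (by positivity)
    have hexp : x ⬝ᵥ (Atilᵀ * B * Atil) *ᵥ x
        = x ⬝ᵥ (Aᵀ * B * A) *ᵥ x + (u ⬝ᵥ B *ᵥ e + e ⬝ᵥ B *ᵥ u + e ⬝ᵥ B *ᵥ e) := by
      rw [key, key, hAt, Matrix.mulVec_add, add_dotProduct, dotProduct_add,
        dotProduct_add]
      ring
    have hsumC : x ⬝ᵥ (Atilᵀ * B * Atil + C) *ᵥ x
        = x ⬝ᵥ (Aᵀ * B * A + C) *ᵥ x + (u ⬝ᵥ B *ᵥ e + e ⬝ᵥ B *ᵥ u + e ⬝ᵥ B *ᵥ e) := by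
      rw [Matrix.add_mulVec, dotProduct_add, Matrix.add_mulVec, dotProduct_add, hexp]
      ring
    have hxx : x ⬝ᵥ x = nx ^ 2 := euc_dot_self x
    have hmin' := hmin x
    rw [hsumC, hxx]
    rw [hxx] at hmin'
    have habs1 := abs_le.1 h1
    have habs2 := abs_le.1 h2
    have habs3 := abs_le.1 h3
    nlinarith [sq_nonneg nx, mul_le_mul_of_nonneg_right hsmall.le (sq_nonneg nx)]
  -- Hermitian
  have hBs : Bᵀ = B := hB.1
  have hherm : (Atilᵀ * B * Atil + C).IsHermitian := by
    have h1 : (Atilᵀ * B * Atil + C)ᵀ = Atilᵀ * B * Atil + C := by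
      rw [Matrix.transpose_add, Matrix.transpose_mul, Matrix.transpose_mul,
        Matrix.transpose_transpose, hBs, Matrix.mul_assoc, (show Cᵀ = C from hC.1)]
    simpa [Matrix.IsHermitian] using h1
  have hpd : (Atilᵀ * B * Atil + C).PosDef := by
    refine Matrix.PosDef.of_dotProduct_mulVec_pos hherm (fun x hx => ?_)
    have hxx : (0:ℝ) < x ⬝ᵥ x := by
      have h := (dotProduct_self_eq_zero (v := x)).ne.2 hx
      have hnn : (0:ℝ) ≤ x ⬝ᵥ x := by rw [euc_dot_self]; positivity
      exact lt_of_le_of_ne hnn (Ne.symm h)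
    have := main x
    have : (0:ℝ) < x ⬝ᵥ (Atilᵀ * B * Atil + C) *ᵥ x :=
      lt_of_lt_of_le (by positivity) this
    simpa [star_trivial] using this
  exact ⟨hpd, main, hpd.det_pos.ne'.isUnit⟩
end
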